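/- Let D be a diagonal n×n real matrix with strictly increasing diagonal entries, let M ⊆ {1,…,n} with |M| = p (1 ≤ p ≤ n−1), let E = Σ_{i∈M} Σ_{ii}, and consider the symmetric bilinear form H_E(Ω, Ω′) = tr([E, Ω] [D, Ω′]) on the space spanned by { Ω_{ij} : i ∈ M, j ∉ M }. Then H_E is negative definite if and only if M = {1, 2, …, p}, and H_E is positive definite if and only if M = {n−p+1, …, n}; in particular there is exactly one choice of M for which H_E is negative definite and exactly one for which it is positive definite. -/

import Mathlib

open Matrix Finset

/-- `Om i j` is the skew-symmetric matrix `Ω_{ij}` with `(i,j)` entry `1`,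
`(j,i)` entry `-1` and zeros elsewhere. -/
def Om {n : ℕ} (i j : Fin n) : Matrix (Fin n) (Fin n) ℝ :=
  Matrix.single i j 1 - Matrix.single j i 1

lemma Om_apply {n : ℕ} (i j a b : Fin n) :
    Om i j a b = (if i = a ∧ j = b then (1:ℝ) else 0) - (if j = a ∧ i = b then 1 else 0) := by
  simp [Om, Matrix.single, Matrix.sub_apply]

lemma sum_sq_neg {n : ℕ} (c : Fin n → Fin n → ℝ) (Ω : Matrix (Fin n) (Fin n) ℝ)
    (h : ∀ i j, Ω i j ≠ 0 → c i j < 0) (hne : Ω ≠ 0) :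
    (∑ i, ∑ j, c i j * (Ω i j)^2) < 0 := by
  have hlt : ∀ i j, Ω i j ≠ 0 → c i j * (Ω i j)^2 < 0 := fun i j hΩ =>
    mul_neg_of_neg_of_pos (h i j hΩ) (by positivity)
  have hle : ∀ i j, c i j * (Ω i j)^2 ≤ 0 := by
    intro i j
    by_cases hΩ : Ω i j = 0
    · simp [hΩ]
    · exact le_of_lt (hlt i j hΩ)
  obtain ⟨a, b, hab⟩ : ∃ a b, Ω a b ≠ 0 := by
    by_contra hc
    push_neg at hc
    exact hne (by ext a b; simp [hc])
  have houter : ∀ i, (∑ j, c i j * (Ω i j)^2) ≤ 0 :=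
    fun i => Finset.sum_nonpos fun j _ => hle i j
  have hstrict : (∑ j, c a j * (Ω a j)^2) < 0 := by
    have := Finset.sum_lt_sum (f := fun j => c a j * (Ω a j)^2) (g := fun _ => (0:ℝ))
      (s := Finset.univ) (fun j _ => hle a j) ⟨b, Finset.mem_univ b, hlt a b hab⟩
    simpa using this
  have := Finset.sum_lt_sum (f := fun i => ∑ j, c i j * (Ω i j)^2) (g := fun _ => (0:ℝ))
    (s := Finset.univ) (fun i _ => houter i) ⟨a, Finset.mem_univ a, hstrict⟩
  simpa using this

lemma sum_sq_pos {n : ℕ} (c : Fin n → Fin n → ℝ) (Ω : Matrix (Fin n) (Fin n) ℝ)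
    (h : ∀ i j, Ω i j ≠ 0 → 0 < c i j) (hne : Ω ≠ 0) :
    0 < (∑ i, ∑ j, c i j * (Ω i j)^2) := by
  have := sum_sq_neg (fun i j => -(c i j)) Ω (fun i j hΩ => neg_neg_of_pos (h i j hΩ)) hne
  have heq : (∑ i, ∑ j, (-(c i j)) * (Ω i j)^2) = -(∑ i, ∑ j, c i j * (Ω i j)^2) := by
    rw [← Finset.sum_neg_distrib]
    refine Finset.sum_congr rfl fun i _ => ?_
    rw [← Finset.sum_neg_distrib]
    exact Finset.sum_congr rfl fun j _ => by ring
  rw [heq] at this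
  linarith

lemma trace_comm_form {n : ℕ} (e d : Fin n → ℝ) (Ω : Matrix (Fin n) (Fin n) ℝ)
    (hskew : ∀ i j, Ω j i = -Ω i j) :
    Matrix.trace ((Matrix.diagonal e * Ω - Ω * Matrix.diagonal e) *
      (Matrix.diagonal d * Ω - Ω * Matrix.diagonal d)) =
      ∑ i, ∑ j, (e i - e j) * (d i - d j) * (Ω i j)^2 := by
  set A := Matrix.diagonal e * Ω - Ω * Matrix.diagonal e with hA
  set B := Matrix.diagonal d * Ω - Ω * Matrix.diagonal d with hB
  have hAe : ∀ i j, A i j = (e i - e j) * Ω i j := by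
    intro i j
    rw [hA]
    simp only [Matrix.sub_apply, Matrix.diagonal_mul, Matrix.mul_diagonal]
    ring
  have hBe : ∀ i j, B i j = (d i - d j) * Ω i j := by
    intro i j
    rw [hB]
    simp only [Matrix.sub_apply, Matrix.diagonal_mul, Matrix.mul_diagonal]
    ring
  rw [Matrix.trace]
  refine Finset.sum_congr rfl fun i _ => ?_
  rw [Matrix.diag_apply, Matrix.mul_apply]
  refine Finset.sum_congr rfl fun j _ => ?_
  rw [hAe i j, hBe j i, hskew i j]
  ring

lemma E_eq_diagonal {n : ℕ} (M : Finset (Fin n)) :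
    (∑ i ∈ M, Matrix.single i i (1 : ℝ)) =
      Matrix.diagonal (fun i => if i ∈ M then (1:ℝ) else 0) := by
  ext a b
  simp only [Matrix.sum_apply, Matrix.single, Matrix.of_apply, Matrix.diagonal_apply]
  by_cases hab : a = b
  · subst hab
    simp only [and_self]
    rw [Finset.sum_ite_eq' M a (fun _ => (1:ℝ))]
    simp
  · rw [Finset.sum_eq_zero, if_neg hab]
    intro i _
    rw [if_neg]
    rintro ⟨rfl, rfl⟩
    exact hab rfl

/-- The space of skew matrices supported on the `M × Mᶜ` cross positions. -/
def crossSpace {n : ℕ} (M : Finset (Fin n)) : Submodule ℝ (Matrix (Fin n) (Fin n) ℝ) where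
  carrier := {Ω | (∀ i j, Ω j i = -Ω i j) ∧ ∀ i j, (i ∈ M ↔ j ∈ M) → Ω i j = 0}
  add_mem' := by
    rintro A B ⟨hA1, hA2⟩ ⟨hB1, hB2⟩
    refine ⟨fun i j => ?_, fun i j h => ?_⟩
    · simp only [Matrix.add_apply, hA1 i j, hB1 i j]; ring
    · simp only [Matrix.add_apply, hA2 i j h, hB2 i j h, add_zero]
  zero_mem' := ⟨fun i j => by simp, fun i j _ => rfl⟩
  smul_mem' := by
    rintro c A ⟨h1, h2⟩
    refine ⟨fun i j => ?_, fun i j h => ?_⟩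
    · simp only [Matrix.smul_apply, h1 i j, smul_eq_mul]; ring
    · simp only [Matrix.smul_apply, h2 i j h, smul_zero]

lemma lowest_of_closed {n p : ℕ} (M : Finset (Fin n)) (hcard : M.card = p)
    (hclosed : ∀ i ∈ M, ∀ j : Fin n, j < i → j ∈ M) :
    M = Finset.univ.filter (fun i : Fin n => (i : ℕ) < p) := by
  ext i
  simp only [Finset.mem_filter, Finset.mem_univ, true_and]
  constructor
  · intro hi
    have hsub : Finset.Iic i ⊆ M := by
      intro j hj
      rcases lt_or_eq_of_le (Finset.mem_Iic.mp hj) with h | h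
      · exact hclosed i hi j h
      · exact h ▸ hi
    have := Finset.card_le_card hsub
    rw [Fin.card_Iic, hcard] at this
    omega
  · intro hi
    by_contra hmi
    have hsub : M ⊆ Finset.Iio i := by
      intro k hk
      rw [Finset.mem_Iio]
      by_contra hik
      push_neg at hik
      rcases lt_or_eq_of_le hik with h | h
      · exact hmi (hclosed k hk i h)
      · exact hmi (h ▸ hk)
    have := Finset.card_le_card hsub
    rw [Fin.card_Iio, hcard] at this
    omega

lemma highest_of_closed {n p : ℕ} (hp1 : 1 ≤ p) (hpn : p < n) (M : Finset (Fin n))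
    (hcard : M.card = p)
    (hclosed : ∀ i ∈ M, ∀ j : Fin n, i < j → j ∈ M) :
    M = Finset.univ.filter (fun i : Fin n => n - p ≤ (i : ℕ)) := by
  ext i
  simp only [Finset.mem_filter, Finset.mem_univ, true_and]
  constructor
  · intro hi
    have hsub : Finset.Ici i ⊆ M := by
      intro j hj
      rcases lt_or_eq_of_le (Finset.mem_Ici.mp hj) with h | h
      · exact hclosed i hi j h
      · exact h ▸ hi
    have := Finset.card_le_card hsub
    rw [Fin.card_Ici, hcard] at this
    have := i.isLt
    omega
  · intro hi
    by_contra hmi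
    have hsub : M ⊆ Finset.Ioi i := by
      intro k hk
      rw [Finset.mem_Ioi]
      by_contra hik
      push_neg at hik
      rcases lt_or_eq_of_le hik with h | h
      · exact hmi (hclosed k hk i h)
      · exact hmi (h ▸ hk)
    have := Finset.card_le_card hsub
    rw [Fin.card_Ioi, hcard] at this
    have := i.isLt
    omega

/-- Let `D` be diagonal with strictly increasing diagonal entries and, for a
`p`-element subset `M`, let `E_M = ∑_{i∈M} Σ_{ii}` and
`H(Ω,Ω') = tr([E_M,Ω][D,Ω'])` on the span of `{Ω_{ij} : i ∈ M, j ∉ M}`. Then `H` is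
negative definite iff `M = {1,…,p}` (the lowest `p` indices) and positive definite iff
`M = {n−p+1,…,n}` (the highest `p` indices); in particular exactly one `M` gives a
negative definite form and exactly one a positive definite form. -/
theorem stmt14 {n p : ℕ} (hp1 : 1 ≤ p) (hpn : p ≤ n - 1)
    (d : Fin n → ℝ) (hd : StrictMono d) :
    ∀ M : Finset (Fin n), M.card = p →
      ∀ (E : Matrix (Fin n) (Fin n) ℝ),
        E = ∑ i ∈ M, Matrix.single i i (1 : ℝ) →
      ∀ (H : Matrix (Fin n) (Fin n) ℝ → Matrix (Fin n) (Fin n) ℝ → ℝ),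
        (∀ Ω Ω', H Ω Ω' = Matrix.trace
          ((E * Ω - Ω * E) * (Matrix.diagonal d * Ω' - Ω' * Matrix.diagonal d))) →
      ∀ (V : Submodule ℝ (Matrix (Fin n) (Fin n) ℝ)),
        V = Submodule.span ℝ
          {X : Matrix (Fin n) (Fin n) ℝ | ∃ i ∈ M, ∃ j ∉ M, X = Om i j} →
      ((∀ Ω ∈ V, Ω ≠ 0 → H Ω Ω < 0) ↔
          M = Finset.univ.filter (fun i : Fin n => (i : ℕ) < p)) ∧
      ((∀ Ω ∈ V, Ω ≠ 0 → 0 < H Ω Ω) ↔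
          M = Finset.univ.filter (fun i : Fin n => n - p ≤ (i : ℕ))) := by
  intro M hcard E hE H hH V hV
  have hpn' : p < n := by omega
  set e : Fin n → ℝ := fun i => if i ∈ M then (1:ℝ) else 0 with he
  have hEd : E = Matrix.diagonal e := by rw [hE, E_eq_diagonal]
  have hHform : ∀ Ω : Matrix (Fin n) (Fin n) ℝ, (∀ i j, Ω j i = -Ω i j) →
      H Ω Ω = ∑ i, ∑ j, (e i - e j) * (d i - d j) * (Ω i j)^2 := by
    intro Ω hs
    rw [hH, hEd, trace_comm_form e d Ω hs]
  -- Om basics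
  have hOmskew : ∀ i j : Fin n, ∀ a b, Om i j b a = -Om i j a b := by
    intro i j a b
    rw [Om_apply, Om_apply]
    by_cases h1 : i = a ∧ j = b <;> by_cases h2 : j = a ∧ i = b <;>
      simp [h1, h2, and_comm] <;> tauto
  have hOmne : ∀ i j : Fin n, i ≠ j → Om i j ≠ 0 := by
    intro i j hij h0
    have h1 : Om i j i j = 1 := by
      rw [Om_apply, if_pos ⟨rfl, rfl⟩, if_neg (fun h => hij h.2)]
      norm_num
    rw [h0] at h1
    simp at h1
  have hOmsupp : ∀ i j a b : Fin n, Om i j a b ≠ 0 → (a = i ∧ b = j) ∨ (a = j ∧ b = i) := by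
    intro i j a b hab
    rw [Om_apply] at hab
    by_cases h1 : i = a ∧ j = b
    · exact Or.inl ⟨h1.1.symm, h1.2.symm⟩
    · by_cases h2 : j = a ∧ i = b
      · exact Or.inr ⟨h2.1.symm, h2.2.symm⟩
      · simp [h1, h2] at hab
  have hVsub : ∀ Ω ∈ V, (∀ i j, Ω j i = -Ω i j) ∧
      ∀ i j, (i ∈ M ↔ j ∈ M) → Ω i j = 0 := by
    intro Ω hΩ
    rw [hV] at hΩ
    have hle : Submodule.span ℝ
        {X : Matrix (Fin n) (Fin n) ℝ | ∃ i ∈ M, ∃ j ∉ M, X = Om i j} ≤ crossSpace M := by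
      rw [Submodule.span_le]
      rintro X ⟨i, hi, j, hj, rfl⟩
      refine ⟨hOmskew i j, fun a b hab => ?_⟩
      by_contra h0
      rcases hOmsupp i j a b h0 with ⟨rfl, rfl⟩ | ⟨rfl, rfl⟩
      · exact hj (hab.mp hi)
      · exact hj (hab.mpr hi)
    exact hle hΩ
  have hOmV : ∀ i ∈ M, ∀ j ∉ M, Om i j ∈ V := by
    intro i hi j hj
    rw [hV]
    exact Submodule.subset_span ⟨i, hi, j, hj, rfl⟩
  constructor
  · constructor
    · -- negative definite → M lowest
      intro hneg
      apply lowest_of_closed M hcard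
      intro i hi j hji
      by_contra hj
      have hij : i ≠ j := fun h => absurd hji (h ▸ lt_irrefl i)
      have hval := hneg _ (hOmV i hi j hj) (hOmne i j hij)
      rw [hHform _ (hOmskew i j)] at hval
      have hpos : 0 < ∑ a, ∑ b, (e a - e b) * (d a - d b) * (Om i j a b)^2 := by
        apply sum_sq_pos
        · intro a b hab
          have h1 : e i = 1 := by simp [he, hi]
          have h2 : e j = 0 := by simp [he, hj]
          have hdd := hd hji
          rcases hOmsupp i j a b hab with ⟨ha, hb⟩ | ⟨ha, hb⟩ <;> rw [ha, hb] <;>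
            rw [h1, h2] <;> nlinarith
        · exact hOmne i j hij
      linarith
    · -- M lowest → negative definite
      intro hM Ω hΩV hΩne
      obtain ⟨hskew, hsupp⟩ := hVsub Ω hΩV
      rw [hHform Ω hskew]
      apply sum_sq_neg _ Ω _ hΩne
      intro i j hij
      have hxor : ¬(i ∈ M ↔ j ∈ M) := fun h => hij (hsupp i j h)
      by_cases hi : i ∈ M
      · have hj : j ∉ M := fun hj => hxor ⟨fun _ => hj, fun _ => hi⟩
        have hip : (i:ℕ) < p := by
          rw [hM] at hi; simpa using hi
        have hjp : ¬((j:ℕ) < p) := by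
          rw [hM] at hj; simpa using hj
        have hij' : i < j := by rw [Fin.lt_def]; omega
        have := hd hij'
        have h1 : e i = 1 := by simp [he, hi]
        have h2 : e j = 0 := by simp [he, hj]
        rw [h1, h2]; nlinarith
      · have hj : j ∈ M := by
          by_contra hj
          exact hxor ⟨fun h => absurd h hi, fun h => absurd h hj⟩
        have hjp : (j:ℕ) < p := by
          rw [hM] at hj; simpa using hj
        have hip : ¬((i:ℕ) < p) := by
          rw [hM] at hi; simpa using hi
        have hij' : j < i := by rw [Fin.lt_def]; omega
        have := hd hij'
        have h1 : e i = 0 := by simp [he, hi]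
        have h2 : e j = 1 := by simp [he, hj]
        rw [h1, h2]; nlinarith
  · constructor
    · -- positive definite → M highest
      intro hpos
      apply highest_of_closed hp1 hpn' M hcard
      intro i hi j hji
      by_contra hj
      have hij : i ≠ j := fun h => absurd hji (h ▸ lt_irrefl i)
      have hval := hpos _ (hOmV i hi j hj) (hOmne i j hij)
      rw [hHform _ (hOmskew i j)] at hval
      have hneg : (∑ a, ∑ b, (e a - e b) * (d a - d b) * (Om i j a b)^2) < 0 := by
        apply sum_sq_neg
        · intro a b hab
          have h1 : e i = 1 := by simp [he, hi]
          have h2 : e j = 0 := by simp [he, hj]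
          have hdd := hd hji
          rcases hOmsupp i j a b hab with ⟨ha, hb⟩ | ⟨ha, hb⟩ <;> rw [ha, hb] <;>
            rw [h1, h2] <;> nlinarith
        · exact hOmne i j hij
      linarith
    · -- M highest → positive definite
      intro hM Ω hΩV hΩne
      obtain ⟨hskew, hsupp⟩ := hVsub Ω hΩV
      rw [hHform Ω hskew]
      apply sum_sq_pos _ Ω _ hΩne
      intro i j hij
      have hxor : ¬(i ∈ M ↔ j ∈ M) := fun h => hij (hsupp i j h)
      by_cases hi : i ∈ M
      · have hj : j ∉ M := fun hj => hxor ⟨fun _ => hj, fun _ => hi⟩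
        have hip : n - p ≤ (i:ℕ) := by
          rw [hM] at hi; simpa using hi
        have hjp : ¬(n - p ≤ (j:ℕ)) := by
          rw [hM] at hj; simpa using hj
        have hij' : j < i := by rw [Fin.lt_def]; omega
        have := hd hij'
        have h1 : e i = 1 := by simp [he, hi]
        have h2 : e j = 0 := by simp [he, hj]
        rw [h1, h2]; nlinarith
      · have hj : j ∈ M := by
          by_contra hj
          exact hxor ⟨fun h => absurd h hi, fun h => absurd h hj⟩
        have hjp : n - p ≤ (j:ℕ) := by
          rw [hM] at hj; simpa using hj
        have hip : ¬(n - p ≤ (i:ℕ)) := by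
          rw [hM] at hi; simpa using hi
        have hij' : i < j := by rw [Fin.lt_def]; omega
        have := hd hij'
        have h1 : e i = 0 := by simp [he, hi]
        have h2 : e j = 1 := by simp [he, hj]
        rw [h1, h2]; nlinarith
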